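/- Under the conditions of the previous claim (aggregate gradient bounded by $\frac{\lambda N}{2|\mathcal{S}||\mathcal{A}|}$ in norm and $\pi_\theta(a|s) \ge \frac{1}{2|\mathcal{A}|}$ for the relevant $(s,a)$), the maximum aggregate weighted advantage is bounded: $\max_{a}\sum_{i: s\in\mathcal{S}_i}\frac{d_{i,\mu_i}^{\pi_\theta}(s)}{1-\gamma_i}A_i^{\pi_\theta}(s,a) \le \frac{2\lambda N}{|\mathcal{S}|}$ for every state $s$. -/

import Mathlib

/-- Softmax policy parameterization. -/
noncomputable def softmax {S A : Type*} [Fintype A] (θ : S → A → ℝ) (s : S) (a : A) : ℝ :=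
  Real.exp (θ s a) / ∑ a' : A, Real.exp (θ s a')

/-- The gradient coordinate of the regularized objective `L_i^λ`:
`∂L_i^λ/∂θ_{s,a} = 1/(1-γ_i) d_i(s) π_θ(a|s) A_i(s,a) + λ/|S| (1/|A| - π_θ(a|s))`. -/
noncomputable def gradL {S A : Type*} [Fintype S] [Fintype A]
    (lam : ℝ) (γi : ℝ) (di : S → ℝ) (Advi : S → A → ℝ) (θ : S → A → ℝ) (s : S) (a : A) : ℝ :=
  1 / (1 - γi) * di s * softmax θ s a * Advi s a +
    lam / (Fintype.card S : ℝ) * (1 / (Fintype.card A : ℝ) - softmax θ s a)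

/-- If the aggregate gradient is bounded by `λN/(2|S||A|)` in absolute value at all `(s,a)`,
and `π_θ(a|s) ≥ 1/(2|A|)` whenever the aggregate weighted advantage at `(s,a)` is
nonnegative, then for every state `s` and action `a`,
`∑_i d_i(s)/(1-γ_i) A_i(s,a) ≤ 2λN/|S|` (hence so is the max over actions). -/
theorem stmt_19 {S A : Type*} [Fintype S] [Fintype A] [Nonempty S] [Nonempty A]
    (N : ℕ) (lam : ℝ) (hlam : 0 < lam)
    (γ : Fin N → ℝ) (hγ : ∀ i, γ i ∈ Set.Ioo (0 : ℝ) 1)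
    (dvis : Fin N → S → ℝ) (hd : ∀ i s, 0 ≤ dvis i s)
    (Adv : Fin N → S → A → ℝ) (θ : S → A → ℝ)
    (hgrad : ∀ (s : S) (a : A),
      |∑ i, gradL lam (γ i) (dvis i) (Adv i) θ s a|
        ≤ lam * N / (2 * (Fintype.card S : ℝ) * (Fintype.card A : ℝ)))
    (hpi : ∀ (s : S) (a : A),
      0 ≤ ∑ i, dvis i s / (1 - γ i) * Adv i s a →
        softmax θ s a ≥ 1 / (2 * (Fintype.card A : ℝ))) :
    ∀ (s : S) (a : A),
      ∑ i, dvis i s / (1 - γ i) * Adv i s a ≤ 2 * lam * N / (Fintype.card S : ℝ) := by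
  intro s a
  have hcS : (0:ℝ) < (Fintype.card S : ℝ) := by positivity
  have hcA : (0:ℝ) < (Fintype.card A : ℝ) := by positivity
  set cS := (Fintype.card S : ℝ)
  set cA := (Fintype.card A : ℝ)
  set T := ∑ i, dvis i s / (1 - γ i) * Adv i s a with hTdef
  by_cases hT : 0 ≤ T
  · have hπ := hpi s a hT
    set π := softmax θ s a with hπdef
    have hπpos : 0 < π := lt_of_lt_of_le (by positivity) hπ
    have hsum : ∑ i, gradL lam (γ i) (dvis i) (Adv i) θ s a
        = π * T + (N : ℝ) * (lam / cS * (1 / cA - π)) := by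
      rw [hTdef, Finset.mul_sum]
      rw [show (N:ℝ) * (lam / cS * (1 / cA - π)) = ∑ _i : Fin N, lam / cS * (1 / cA - π) by
        simp [Finset.sum_const, nsmul_eq_mul]]
      rw [← Finset.sum_add_distrib]
      apply Finset.sum_congr rfl
      intro i _
      simp only [gradL]
      ring
    have hG := hgrad s a
    rw [hsum] at hG
    have hG1 : π * T + (N : ℝ) * (lam / cS * (1 / cA - π))
        ≤ lam * N / (2 * cS * cA) := (abs_le.mp hG).2
    have hNn : (0:ℝ) ≤ (N:ℝ) := Nat.cast_nonneg N
    have key :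
        π * T * cS * cA ≤ 2 * lam * (N:ℝ) * π * cA := by
      have hG2 := mul_le_mul_of_nonneg_right hG1 (le_of_lt (mul_pos hcS hcA))
      have eL : (π * T + (N:ℝ) * (lam / cS * (1 / cA - π))) * (cS * cA)
          = π * T * cS * cA + lam * (N:ℝ) - lam * (N:ℝ) * cA * π := by
        field_simp
        ring
      have eR : lam * (N:ℝ) / (2 * cS * cA) * (cS * cA) = lam * (N:ℝ) / 2 := by
        field_simp
      rw [eL, eR] at hG2
      have hπ2 : 1 ≤ 2 * cA * π := by
        have := mul_le_mul_of_nonneg_right hπ (le_of_lt (by positivity : (0:ℝ) < 2 * cA))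
        calc (1:ℝ) = 1 / (2 * cA) * (2 * cA) := by field_simp
        _ ≤ π * (2 * cA) := this
        _ = 2 * cA * π := by ring
      nlinarith [mul_nonneg (mul_nonneg hlam.le hNn) (mul_nonneg hcA.le hπpos.le),
        mul_nonneg hlam.le hNn]
    have key2 : π * T * cS ≤ 2 * lam * (N:ℝ) * π :=
      le_of_mul_le_mul_right (by linarith [key]) hcA
    rw [le_div_iff₀ hcS]
    have : T * cS = (π * T * cS) / π := by field_simp
    rw [this]
    rw [div_le_iff₀ hπpos]
    calc π * T * cS ≤ 2 * lam * (N:ℝ) * π := key2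
    _ = 2 * lam * ↑N * π := by ring
  · have : T < 0 := not_le.mp hT
    have : (0:ℝ) ≤ 2 * lam * N / cS := by positivity
    linarith
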